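/- Let q : ℝ → ℝ be measurable with ∫₀^∞ (1+x)|q(x)| dx < ∞, let λ₁ > 0, and let f be a Jost solution for q. Then, using the principal square root, f(z − λ₁, 0) − 1 + (i/(2 z^{1/2})) ∫₀^∞ (e^{2i(z−λ₁)^{1/2} x} − 1) q(x) dx = O(|z|^{−1}) as |z| → ∞ with z ranging over the closed upper half-plane {z ∈ ℂ | Im z ≥ 0}. -/

import Mathlib

open MeasureTheory Complex Filter Asymptotics

/-- `f` is a Jost solution for the potential `q`: for each `z` in the closed upper half-plane
with `z ≠ 0`, the map `x ↦ e^{-i√z x} f(z,x)` is (a.e. strongly) measurable and bounded on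
`[0,∞)`, and `f(z,·)` satisfies the Volterra integral equation (14.4.7). Here `z ^ (1/2 : ℂ)`
is the principal square root. -/
def IsJost (q : ℝ → ℝ) (f : ℂ → ℝ → ℂ) : Prop :=
  ∀ z : ℂ, 0 ≤ z.im → z ≠ 0 →
    AEStronglyMeasurable
      (fun x : ℝ => Complex.exp (-Complex.I * z ^ (1 / 2 : ℂ) * x) * f z x)
      (volume.restrict (Set.Ici 0)) ∧
    (∃ M : ℝ, ∀ x : ℝ, 0 ≤ x →
      ‖Complex.exp (-Complex.I * z ^ (1 / 2 : ℂ) * x) * f z x‖ ≤ M) ∧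
    ∀ x : ℝ, 0 ≤ x →
      f z x = Complex.exp (Complex.I * z ^ (1 / 2 : ℂ) * x)
        - ∫ t in Set.Ioi x, (z ^ (1 / 2 : ℂ))⁻¹
            * Complex.sin (z ^ (1 / 2 : ℂ) * ((x : ℂ) - (t : ℂ))) * (q t : ℂ) * f z t

lemma sqrtQuadrant (z : ℂ) (hz : z ≠ 0) (him : 0 ≤ z.im) :
    0 ≤ (z ^ (1/2 : ℂ)).re ∧ 0 ≤ (z ^ (1/2 : ℂ)).im := by
  rw [Complex.cpow_def_of_ne_zero hz]
  have harg : (Complex.log z * ((1:ℂ)/2)).im = z.arg / 2 := by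
    simp [Complex.mul_im, Complex.log_im]; ring
  have h1 : 0 ≤ z.arg := Complex.arg_nonneg_iff.2 him
  have h2 : z.arg ≤ Real.pi := Complex.arg_le_pi z
  have hcos : 0 ≤ Real.cos (z.arg / 2) :=
    Real.cos_nonneg_of_mem_Icc ⟨by linarith [Real.pi_pos], by linarith⟩
  have hsin : 0 ≤ Real.sin (z.arg / 2) :=
    Real.sin_nonneg_of_nonneg_of_le_pi (by linarith) (by linarith [Real.pi_pos])
  constructor
  · rw [Complex.exp_re]
    rw [show (Complex.log z * (1/2 : ℂ)).im = z.arg / 2 from harg]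
    positivity
  · rw [Complex.exp_im]
    rw [show (Complex.log z * (1/2 : ℂ)).im = z.arg / 2 from harg]
    positivity

lemma sqrtMulSelf (z : ℂ) (hz : z ≠ 0) : z ^ (1/2 : ℂ) * z ^ (1/2 : ℂ) = z := by
  rw [← Complex.cpow_add _ _ hz]; norm_num

lemma sqrtNeZero (z : ℂ) (hz : z ≠ 0) : z ^ (1/2 : ℂ) ≠ 0 := by
  intro h; apply hz; rw [← sqrtMulSelf z hz, h, mul_zero]

lemma absSqrt (z : ℂ) (hz : z ≠ 0) :
    ‖z ^ (1/2 : ℂ)‖ = Real.sqrt (‖z‖) := by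
  rw [Complex.norm_cpow_of_ne_zero hz]
  simp [Real.sqrt_eq_rpow]

lemma sqAbsSqrt (z : ℂ) (hz : z ≠ 0) :
    ‖z ^ (1/2 : ℂ)‖ * ‖z ^ (1/2 : ℂ)‖ = ‖z‖ := by
  rw [absSqrt z hz, Real.mul_self_sqrt (norm_nonneg z)]

lemma sinExpIdentity (s x t c F : ℂ) (hs : s ≠ 0) :
    Complex.exp (-I*s*x) * (s⁻¹ * Complex.sin (s*(x - t)) * c * F)
    = (1 - Complex.exp (2*I*s*(t-x)))/(2*I*s) * c * (Complex.exp (-I*s*t) * F) := by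
  have hu : Complex.exp (I*s*x) ≠ 0 := Complex.exp_ne_zero _
  have hv : Complex.exp (I*s*t) ≠ 0 := Complex.exp_ne_zero _
  rw [Complex.sin]
  have h1 : Complex.exp (-I*s*x) = (Complex.exp (I*s*x))⁻¹ := by
    rw [← Complex.exp_neg]; congr 1; ring
  have h2 : Complex.exp (-(s*(x-t))*I) = Complex.exp (I*s*t) * (Complex.exp (I*s*x))⁻¹ := by
    rw [← Complex.exp_neg, ← Complex.exp_add]; congr 1; ring
  have h3 : Complex.exp ((s*(x-t))*I) = Complex.exp (I*s*x) * (Complex.exp (I*s*t))⁻¹ := by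
    rw [← Complex.exp_neg, ← Complex.exp_add]; congr 1; ring
  have h4 : Complex.exp (2*I*s*(t-x))
      = Complex.exp (I*s*t) * Complex.exp (I*s*t)
        * ((Complex.exp (I*s*x))⁻¹ * (Complex.exp (I*s*x))⁻¹) := by
    rw [← Complex.exp_neg, ← Complex.exp_add, ← Complex.exp_add, ← Complex.exp_add]
    congr 1; ring
  have h5 : Complex.exp (-I*s*t) = (Complex.exp (I*s*t))⁻¹ := by
    rw [← Complex.exp_neg]; congr 1; ring
  rw [h1, h2, h3, h4, h5]
  have hI : (I:ℂ) ≠ 0 := Complex.I_ne_zero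
  field_simp
  ring_nf
  simp only [Complex.I_sq]
  ring

lemma expAbsLeOne (s : ℂ) (hsim : 0 ≤ s.im) (r : ℝ) (hr : 0 ≤ r) :
    ‖Complex.exp (2*I*s*(r:ℂ))‖ ≤ 1 := by
  rw [Complex.norm_exp, Real.exp_le_one_iff]
  have : (2*I*s*(r:ℂ)).re = -2*s.im*r := by
    simp [Complex.mul_re, Complex.mul_im]
  rw [this]
  nlinarith [mul_nonneg hsim hr]

lemma kernelAbsLe (s : ℂ) (hsim : 0 ≤ s.im) (r : ℝ) (hr : 0 ≤ r) :
    ‖1 - Complex.exp (2*I*s*(r:ℂ))‖ ≤ 2 := by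
  calc ‖1 - Complex.exp (2*I*s*(r:ℂ))‖
      ≤ ‖(1:ℂ)‖ + ‖Complex.exp (2*I*s*(r:ℂ))‖ :=
        norm_sub_le _ _
    _ ≤ 2 := by
        have := expAbsLeOne s hsim r hr
        simp only [norm_one] at *
        linarith

lemma kernelAbsLe' (s : ℂ) (hsim : 0 ≤ s.im) (r : ℝ) (hr : 0 ≤ r) :
    ‖Complex.exp (2*I*s*(r:ℂ)) - 1‖ ≤ 2 := by
  rw [← norm_neg]
  rw [show -(Complex.exp (2*I*s*(r:ℂ)) - 1) = 1 - Complex.exp (2*I*s*(r:ℂ)) by ring]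
  exact kernelAbsLe s hsim r hr

lemma absAddGe (a b : ℂ) (ha1 : 0 ≤ a.re) (ha2 : 0 ≤ a.im)
    (hb1 : 0 ≤ b.re) (hb2 : 0 ≤ b.im) :
    ‖b‖ ≤ ‖a + b‖ := by
  rw [Complex.norm_def, Complex.norm_def]
  apply Real.sqrt_le_sqrt
  rw [Complex.normSq_add]
  have h : 0 ≤ (a * (starRingEnd ℂ) b).re := by
    simp only [Complex.mul_re, Complex.conj_re, Complex.conj_im]
    nlinarith
  nlinarith [Complex.normSq_nonneg a]

lemma jost_m_eq (q : ℝ → ℝ) (f : ℂ → ℝ → ℂ) (hf : IsJost q f)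
    (w : ℂ) (him : 0 ≤ w.im) (hw : w ≠ 0) (x : ℝ) (hx : 0 ≤ x) :
    Complex.exp (-I * w ^ (1/2 : ℂ) * x) * f w x
    = 1 - ∫ t in Set.Ioi x,
        (1 - Complex.exp (2*I*(w ^ (1/2 : ℂ))*((t:ℂ) - (x:ℂ))))/(2*I*(w ^ (1/2 : ℂ)))
          * (q t : ℂ) * (Complex.exp (-I*(w ^ (1/2 : ℂ))*(t:ℂ)) * f w t) := by
  have hs : w ^ (1/2 : ℂ) ≠ 0 := sqrtNeZero w hw
  obtain ⟨-, -, heq⟩ := hf w him hw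
  rw [heq x hx, mul_sub]
  congr 1
  · rw [← Complex.exp_add]
    rw [show -I * w ^ (1/2 : ℂ) * (x:ℂ) + I * w ^ (1/2 : ℂ) * (x:ℂ) = 0 by ring]
    exact Complex.exp_zero
  · rw [← MeasureTheory.integral_const_mul]
    apply integral_congr_ae
    filter_upwards with t
    have := sinExpIdentity (w ^ (1/2 : ℂ)) (x:ℂ) (t:ℂ) (q t : ℂ) (f w t) hs
    convert this using 2
set_option maxHeartbeats 1000000 in
lemma jost_m_bound (q : ℝ → ℝ) (hq_meas : Measurable q)
    (hqI : IntegrableOn (fun x => |q x|) (Set.Ioi 0))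
    (f : ℂ → ℝ → ℂ) (hf : IsJost q f)
    (w : ℂ) (him : 0 ≤ w.im) (hw : w ≠ 0)
    (hbig : 2 * (∫ t in Set.Ioi (0:ℝ), |q t|) ≤ ‖w ^ (1/2 : ℂ)‖) :
    ∀ x : ℝ, 0 ≤ x →
      ‖Complex.exp (-I * w ^ (1/2 : ℂ) * x) * f w x - 1‖
        ≤ 2 * (∫ t in Set.Ioi (0:ℝ), |q t|) / ‖w ^ (1/2 : ℂ)‖ := by
  have hmean : ∀ x : ℝ, 0 ≤ x →
      Complex.exp (-I * w ^ (1/2 : ℂ) * x) * f w x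
      = 1 - ∫ t in Set.Ioi x,
          (1 - Complex.exp (2*I*(w ^ (1/2 : ℂ))*((t:ℂ) - (x:ℂ))))/(2*I*(w ^ (1/2 : ℂ)))
            * (q t : ℂ) * (Complex.exp (-I*(w ^ (1/2 : ℂ))*(t:ℂ)) * f w t) :=
    fun x hx => jost_m_eq q f hf w him hw x hx
  obtain ⟨-, ⟨M, hM⟩, -⟩ := hf w him hw
  set Q := ∫ t in Set.Ioi (0:ℝ), |q t| with hQdef
  have hQ0 : 0 ≤ Q := integral_nonneg fun t => abs_nonneg _
  set s := w ^ (1/2 : ℂ) with hs_def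
  have hs : s ≠ 0 := sqrtNeZero w hw
  have hsabs : 0 < ‖s‖ := norm_pos_iff.mpr hs
  have hsim : 0 ≤ s.im := (sqrtQuadrant w hw him).2
  set S := sSup ((fun t : ℝ => ‖Complex.exp (-I*s*(t:ℂ)) * f w t‖) '' Set.Ici 0)
    with hS_def
  have hbdd : BddAbove ((fun t : ℝ => ‖Complex.exp (-I*s*(t:ℂ)) * f w t‖) '' Set.Ici 0) := by
    refine ⟨M, ?_⟩
    rintro y ⟨t, ht, rfl⟩
    exact hM t ht
  have hSle : ∀ t : ℝ, 0 ≤ t → ‖Complex.exp (-I*s*(t:ℂ)) * f w t‖ ≤ S :=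
    fun t ht => le_csSup hbdd ⟨t, ht, rfl⟩
  have hS0 : 0 ≤ S := le_trans (norm_nonneg _) (hSle 0 le_rfl)
  have hIb : ∀ x : ℝ, 0 ≤ x →
      ‖∫ t in Set.Ioi x,
        (1 - Complex.exp (2*I*s*((t:ℂ) - (x:ℂ))))/(2*I*s) * (q t : ℂ)
          * (Complex.exp (-I*s*(t:ℂ)) * f w t)‖
      ≤ Q / ‖s‖ * S := by
    intro x hx
    calc ‖∫ t in Set.Ioi x,
          (1 - Complex.exp (2*I*s*((t:ℂ) - (x:ℂ))))/(2*I*s) * (q t : ℂ)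
            * (Complex.exp (-I*s*(t:ℂ)) * f w t)‖
        ≤ ∫ t in Set.Ioi x,
          ‖(1 - Complex.exp (2*I*s*((t:ℂ) - (x:ℂ))))/(2*I*s) * (q t : ℂ)
            * (Complex.exp (-I*s*(t:ℂ)) * f w t)‖ :=
          norm_integral_le_integral_norm _
      _ ≤ ∫ t in Set.Ioi x, S / ‖s‖ * |q t| := by
          apply integral_mono_of_nonneg (ae_of_all _ fun t => norm_nonneg _)
            ((hqI.mono_set (Set.Ioi_subset_Ioi hx)).const_mul _)
          refine (ae_restrict_iff' measurableSet_Ioi).2 (ae_of_all _ fun t ht => ?_)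
          have hcast : (t:ℂ) - (x:ℂ) = ((t - x : ℝ) : ℂ) := by push_cast; ring
          have hker : ‖(1 - Complex.exp (2*I*s*((t:ℂ) - (x:ℂ))))/(2*I*s)‖
              ≤ (‖s‖)⁻¹ := by
            rw [norm_div]
            have h2 : ‖1 - Complex.exp (2*I*s*((t:ℂ) - (x:ℂ)))‖ ≤ 2 := by
              rw [hcast]
              exact kernelAbsLe s hsim (t - x) (by linarith [ht.out.le])
            have h3 : ‖2*I*s‖ = 2 * ‖s‖ := by
              simp [map_mul]
            rw [h3, div_le_iff₀ (by positivity)]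
            calc ‖1 - Complex.exp (2*I*s*((t:ℂ) - (x:ℂ)))‖ ≤ 2 := h2
              _ = (‖s‖)⁻¹ * (2 * ‖s‖) := by field_simp
          have hmt : ‖Complex.exp (-I*s*(t:ℂ)) * f w t‖ ≤ S := by
            exact hSle t (le_trans hx ht.out.le)
          calc ‖(1 - Complex.exp (2*I*s*((t:ℂ) - (x:ℂ))))/(2*I*s) * (q t : ℂ)
                * (Complex.exp (-I*s*(t:ℂ)) * f w t)‖
              = ‖(1 - Complex.exp (2*I*s*((t:ℂ) - (x:ℂ))))/(2*I*s)‖ * |q t|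
                * ‖Complex.exp (-I*s*(t:ℂ)) * f w t‖ := by
                rw [norm_mul, norm_mul, Complex.norm_real, Real.norm_eq_abs]
            _ ≤ (‖s‖)⁻¹ * |q t| * S := by
                apply mul_le_mul _ hmt (norm_nonneg _) (by positivity)
                exact mul_le_mul_of_nonneg_right hker (abs_nonneg _)
            _ = S / ‖s‖ * |q t| := by rw [div_eq_mul_inv]; ring
      _ = S / ‖s‖ * ∫ t in Set.Ioi x, |q t| := integral_const_mul _ _
      _ ≤ S / ‖s‖ * Q := by
          apply mul_le_mul_of_nonneg_left _ (by positivity)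
          exact setIntegral_mono_set hqI (ae_of_all _ fun t => abs_nonneg _)
            (HasSubset.Subset.eventuallyLE (Set.Ioi_subset_Ioi hx))
      _ = Q / ‖s‖ * S := by ring
  have hne : ((fun t : ℝ => ‖Complex.exp (-I*s*(t:ℂ)) * f w t‖) '' Set.Ici 0).Nonempty :=
    ⟨_, ⟨0, le_refl (0:ℝ), rfl⟩⟩
  have hS2 : S ≤ 2 := by
    have h1 : S ≤ 1 + Q / ‖s‖ * S := by
      apply csSup_le hne
      rintro y ⟨t, ht, rfl⟩
      simp only []
      rw [hmean t ht]
      calc ‖1 - ∫ u in Set.Ioi t,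
            (1 - Complex.exp (2*I*s*((u:ℂ) - (t:ℂ))))/(2*I*s) * (q u : ℂ)
              * (Complex.exp (-I*s*(u:ℂ)) * f w u)‖
          ≤ ‖(1:ℂ)‖ + ‖∫ u in Set.Ioi t,
            (1 - Complex.exp (2*I*s*((u:ℂ) - (t:ℂ))))/(2*I*s) * (q u : ℂ)
              * (Complex.exp (-I*s*(u:ℂ)) * f w u)‖ :=
            norm_sub_le _ _
        _ ≤ 1 + Q / ‖s‖ * S := by
            rw [norm_one]
            exact add_le_add le_rfl (hIb t ht)
    have hhalf : Q / ‖s‖ ≤ 1/2 := by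
      rw [div_le_iff₀ hsabs]; linarith
    nlinarith [mul_le_mul_of_nonneg_right hhalf hS0]
  intro x hx
  rw [hmean x hx]
  rw [show (1 : ℂ) - (∫ t in Set.Ioi x,
      (1 - Complex.exp (2*I*s*((t:ℂ) - (x:ℂ))))/(2*I*s) * (q t : ℂ)
        * (Complex.exp (-I*s*(t:ℂ)) * f w t)) - 1
    = -(∫ t in Set.Ioi x,
      (1 - Complex.exp (2*I*s*((t:ℂ) - (x:ℂ))))/(2*I*s) * (q t : ℂ)
        * (Complex.exp (-I*s*(t:ℂ)) * f w t)) by ring]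
  rw [norm_neg]
  calc ‖∫ t in Set.Ioi x,
        (1 - Complex.exp (2*I*s*((t:ℂ) - (x:ℂ))))/(2*I*s) * (q t : ℂ)
          * (Complex.exp (-I*s*(t:ℂ)) * f w t)‖
      ≤ Q / ‖s‖ * S := hIb x hx
    _ ≤ Q / ‖s‖ * 2 := mul_le_mul_of_nonneg_left hS2 (by positivity)
    _ = 2 * Q / ‖s‖ := by ring

set_option maxHeartbeats 1000000 in
theorem statement18 (q : ℝ → ℝ) (hq_meas : Measurable q)
    (hq : IntegrableOn (fun x => (1 + x) * |q x|) (Set.Ioi 0))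
    (lam₁ : ℝ) (hlam₁ : 0 < lam₁) (f : ℂ → ℝ → ℂ) (hf : IsJost q f) :
    (fun z : ℂ => f (z - (lam₁ : ℂ)) 0 - 1
        + Complex.I / (2 * z ^ (1 / 2 : ℂ))
          * ∫ x in Set.Ioi (0 : ℝ),
              (Complex.exp (2 * Complex.I * (z - (lam₁ : ℂ)) ^ (1 / 2 : ℂ) * x) - 1) * (q x : ℂ))
      =O[comap (fun z : ℂ => ‖z‖) atTop ⊓ 𝓟 {z : ℂ | 0 ≤ z.im}]
      (fun z : ℂ => ‖z‖⁻¹) := by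
  have hqI : IntegrableOn (fun x => |q x|) (Set.Ioi 0) := by
    apply Integrable.mono hq hq_meas.abs.aestronglyMeasurable
    refine (ae_restrict_iff' measurableSet_Ioi).2 (ae_of_all _ fun t ht => ?_)
    have ht0 : (0:ℝ) < t := ht
    rw [Real.norm_eq_abs, Real.norm_eq_abs, _root_.abs_abs,
      _root_.abs_of_nonneg (by positivity : (0:ℝ) ≤ (1 + t) * |q t|)]
    nlinarith [abs_nonneg (q t)]
  set Q := ∫ t in Set.Ioi (0:ℝ), |q t| with hQdef
  have hQ0 : 0 ≤ Q := integral_nonneg fun t => abs_nonneg _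
  rw [isBigO_iff]
  refine ⟨4*Q^2 + Q*lam₁, ?_⟩
  rw [eventually_inf_principal]
  have hev : ∀ᶠ z : ℂ in comap (fun z => ‖z‖) atTop,
      (2*lam₁ + 2 + 8*Q^2) ≤ ‖z‖ :=
    tendsto_comap.eventually (eventually_ge_atTop _)
  filter_upwards [hev] with z hzR hzim
  replace hzim : 0 ≤ z.im := hzim
  -- basic facts
  have hz_pos : 0 < ‖z‖ := lt_of_lt_of_le (by positivity) hzR
  have hz0 : z ≠ 0 := by
    intro h; rw [h, norm_zero] at hz_pos; exact lt_irrefl 0 hz_pos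
  set w := z - (lam₁ : ℂ) with hw_def
  have hwim : 0 ≤ w.im := by
    rw [hw_def]; simp [Complex.sub_im]; exact hzim
  have habs_z_le : ‖z‖ ≤ ‖w‖ + lam₁ := by
    calc ‖z‖ = ‖w + (lam₁:ℂ)‖ := by rw [hw_def]; ring_nf
      _ ≤ ‖w‖ + ‖(lam₁:ℂ)‖ := norm_add_le _ _
      _ = ‖w‖ + lam₁ := by rw [Complex.norm_real, Real.norm_eq_abs, abs_of_pos hlam₁]
  have hw_ge1 : 1 + 4*Q^2 ≤ ‖w‖ := by nlinarith [sq_nonneg Q]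
  have hw_half : ‖z‖ / 2 ≤ ‖w‖ := by nlinarith [sq_nonneg Q]
  have hw_pos : 0 < ‖w‖ := by nlinarith [sq_nonneg Q]
  have hw0 : w ≠ 0 := by
    intro h; rw [h, norm_zero] at hw_pos; exact lt_irrefl 0 hw_pos
  -- square roots
  have hsw0 : w ^ (1/2 : ℂ) ≠ 0 := sqrtNeZero w hw0
  have hsz0 : z ^ (1/2 : ℂ) ≠ 0 := sqrtNeZero z hz0
  have hswsq : ‖w ^ (1/2 : ℂ)‖ * ‖w ^ (1/2 : ℂ)‖ = ‖w‖ :=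
    sqAbsSqrt w hw0
  have hszsq : ‖z ^ (1/2 : ℂ)‖ * ‖z ^ (1/2 : ℂ)‖ = ‖z‖ :=
    sqAbsSqrt z hz0
  have hsw_one : 1 ≤ ‖w ^ (1/2 : ℂ)‖ := by
    rw [absSqrt w hw0, Real.one_le_sqrt]; nlinarith [sq_nonneg Q]
  have hsw_2Q : 2*Q ≤ ‖w ^ (1/2 : ℂ)‖ := by
    rw [absSqrt w hw0, Real.le_sqrt (by positivity) (norm_nonneg _)]
    nlinarith
  have hswq := sqrtQuadrant w hw0 hwim
  have hszq := sqrtQuadrant z hz0 hzim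
  have habs_sw_pos : 0 < ‖w ^ (1/2 : ℂ)‖ := norm_pos_iff.mpr hsw0
  have habs_sz_pos : 0 < ‖z ^ (1/2 : ℂ)‖ := norm_pos_iff.mpr hsz0
  have hswim : 0 ≤ (w ^ (1/2 : ℂ)).im := hswq.2
  -- the m-function bound
  have hmb := jost_m_bound q hq_meas hqI f hf w hwim hw0 hsw_2Q
  obtain ⟨hmeas, -, -⟩ := hf w hwim hw0
  have hm_aesm : AEStronglyMeasurable
      (fun t : ℝ => Complex.exp (-I * (w ^ (1/2 : ℂ)) * (t:ℂ)) * f w t)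
      (volume.restrict (Set.Ioi 0)) := by
    have := hmeas.mono_measure (Measure.restrict_mono Set.Ioi_subset_Ici_self le_rfl)
    exact this
  -- the equation at 0
  have heq0 := jost_m_eq q f hf w hwim hw0 0 le_rfl
  simp only [Complex.ofReal_zero, mul_zero, Complex.exp_zero, one_mul, sub_zero] at heq0
  -- notation
  set c : ℂ := w ^ (1/2 : ℂ) with hc_def
  set d : ℂ := z ^ (1/2 : ℂ) with hd_def
  set A : ℂ := ∫ t in Set.Ioi (0:ℝ), (Complex.exp (2*I*c*(t:ℂ)) - 1) * (q t : ℂ) with hA_def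
  -- continuity of the kernel factor
  have hker_cont : Continuous (fun t : ℝ => (Complex.exp (2*I*c*(t:ℂ)) - 1)/(2*I*c)) :=
    ((Complex.continuous_exp.comp
      ((continuous_const).mul Complex.continuous_ofReal)).sub continuous_const).div_const _
  have hq_aesm : AEStronglyMeasurable (fun t : ℝ => (q t : ℂ))
      (volume.restrict (Set.Ioi 0)) :=
    (Complex.measurable_ofReal.comp hq_meas).aestronglyMeasurable
  have hg2_aesm : AEStronglyMeasurable
      (fun t : ℝ => (Complex.exp (2*I*c*(t:ℂ)) - 1)/(2*I*c) * (q t : ℂ))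
      (volume.restrict (Set.Ioi 0)) :=
    (hker_cont.aestronglyMeasurable.restrict).mul hq_aesm
  -- kernel abs bound
  have hkerabs : ∀ t : ℝ, 0 ≤ t →
      ‖(Complex.exp (2*I*c*(t:ℂ)) - 1)/(2*I*c)‖ ≤ (‖c‖)⁻¹ := by
    intro t ht
    rw [norm_div]
    have h3 : ‖2*I*c‖ = 2 * ‖c‖ := by simp [map_mul]
    rw [h3, div_le_iff₀ (by positivity)]
    calc ‖Complex.exp (2*I*c*(t:ℂ)) - 1‖ ≤ 2 := kernelAbsLe' c hswim t ht
      _ = (‖c‖)⁻¹ * (2 * ‖c‖) := by field_simp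
  -- integrability of the pieces
  have hAint : IntegrableOn (fun t : ℝ => (Complex.exp (2*I*c*(t:ℂ)) - 1) * (q t : ℂ))
      (Set.Ioi 0) := by
    apply Integrable.mono' (hqI.const_mul 2)
    · exact (((Complex.continuous_exp.comp
        ((continuous_const).mul Complex.continuous_ofReal)).sub
          continuous_const).aestronglyMeasurable.restrict).mul hq_aesm
    · refine (ae_restrict_iff' measurableSet_Ioi).2 (ae_of_all _ fun t ht => ?_)
      rw [norm_mul, Complex.norm_real, Real.norm_eq_abs]
      exact mul_le_mul_of_nonneg_right (kernelAbsLe' c hswim t (le_of_lt ht)) (abs_nonneg _)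
  have hg1int : IntegrableOn
      (fun t : ℝ => (Complex.exp (2*I*c*(t:ℂ)) - 1)/(2*I*c) * (q t : ℂ)
        * (Complex.exp (-I*c*(t:ℂ)) * f w t - 1)) (Set.Ioi 0) := by
    apply Integrable.mono' (hqI.const_mul ((‖c‖)⁻¹ * (2*Q/‖c‖)))
    · exact hg2_aesm.mul (hm_aesm.sub aestronglyMeasurable_const)
    · refine (ae_restrict_iff' measurableSet_Ioi).2 (ae_of_all _ fun t ht => ?_)
      have ht0 : (0:ℝ) ≤ t := le_of_lt ht
      rw [norm_mul, norm_mul,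
        Complex.norm_real, Real.norm_eq_abs]
      have h1 := hkerabs t ht0
      have h2 := hmb t ht0
      calc ‖(Complex.exp (2*I*c*(t:ℂ)) - 1)/(2*I*c)‖ * |q t|
            * ‖Complex.exp (-I*c*(t:ℂ)) * f w t - 1‖
          ≤ (‖c‖)⁻¹ * |q t| * (2*Q/‖c‖) := by
            apply mul_le_mul _ _ (norm_nonneg _) (by positivity)
            · exact mul_le_mul_of_nonneg_right h1 (abs_nonneg _)
            · exact h2
        _ = (‖c‖)⁻¹ * (2*Q/‖c‖) * |q t| := by ring
  -- step a : f w 0 - 1 as an integral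
  have hstepa : f w 0 - 1 = ∫ t in Set.Ioi (0:ℝ),
      (Complex.exp (2*I*c*(t:ℂ)) - 1)/(2*I*c) * (q t : ℂ)
        * (Complex.exp (-I*c*(t:ℂ)) * f w t) := by
    have h1 : f w 0 - 1 = -∫ t in Set.Ioi (0:ℝ),
        (1 - Complex.exp (2*I*c*(t:ℂ)))/(2*I*c) * (q t : ℂ)
          * (Complex.exp (-I*c*(t:ℂ)) * f w t) := by
      rw [heq0]; ring
    rw [h1, ← integral_neg]
    apply integral_congr_ae
    filter_upwards with t
    ring
  -- split the integral
  have hsplit : (∫ t in Set.Ioi (0:ℝ),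
      (Complex.exp (2*I*c*(t:ℂ)) - 1)/(2*I*c) * (q t : ℂ)
        * (Complex.exp (-I*c*(t:ℂ)) * f w t))
      = (∫ t in Set.Ioi (0:ℝ),
          (Complex.exp (2*I*c*(t:ℂ)) - 1)/(2*I*c) * (q t : ℂ)
            * (Complex.exp (-I*c*(t:ℂ)) * f w t - 1))
        + (2*I*c)⁻¹ * A := by
    have hrw : ∀ t : ℝ,
        (Complex.exp (2*I*c*(t:ℂ)) - 1)/(2*I*c) * (q t : ℂ)
          * (Complex.exp (-I*c*(t:ℂ)) * f w t)
        = (Complex.exp (2*I*c*(t:ℂ)) - 1)/(2*I*c) * (q t : ℂ)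
            * (Complex.exp (-I*c*(t:ℂ)) * f w t - 1)
          + (2*I*c)⁻¹ * ((Complex.exp (2*I*c*(t:ℂ)) - 1) * (q t : ℂ)) := by
      intro t; field_simp; ring
    rw [show (∫ t in Set.Ioi (0:ℝ),
        (Complex.exp (2*I*c*(t:ℂ)) - 1)/(2*I*c) * (q t : ℂ)
          * (Complex.exp (-I*c*(t:ℂ)) * f w t))
      = ∫ t in Set.Ioi (0:ℝ),
        ((Complex.exp (2*I*c*(t:ℂ)) - 1)/(2*I*c) * (q t : ℂ)
            * (Complex.exp (-I*c*(t:ℂ)) * f w t - 1)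
          + (2*I*c)⁻¹ * ((Complex.exp (2*I*c*(t:ℂ)) - 1) * (q t : ℂ)))
      from integral_congr_ae (ae_of_all _ hrw)]
    rw [integral_add hg1int (hAint.const_mul _), integral_const_mul]
  -- scalar bound
  have hscalar : ‖(2*I*c)⁻¹ + I/(2*d)‖
      ≤ lam₁ / (2 * ‖z‖ * ‖c‖) := by
    have hw_eq : c * c = w := sqrtMulSelf w hw0
    have hz_eq : d * d = z := sqrtMulSelf z hz0
    have key : (2*I*c)⁻¹ + I/(2*d) = I/2 * ((c - d) / (c * d)) := by
      have hI : (I:ℂ) ≠ 0 := Complex.I_ne_zero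
      field_simp
      linear_combination d * Complex.I_sq
    rw [key, norm_mul, norm_div, norm_div, norm_mul]
    have hIabs : ‖I/2‖ = 1/2 := by simp
    rw [show ‖I‖ / ‖(2:ℂ)‖ = 1/2 by simp]
    have hdiff : ‖c - d‖ * ‖c + d‖ = lam₁ := by
      have : (c - d) * (c + d) = -(lam₁:ℂ) := by
        have h : (c - d) * (c + d) = c*c - d*d := by ring
        rw [h, hw_eq, hz_eq, hw_def]; ring
      calc ‖c - d‖ * ‖c + d‖ = ‖(c-d)*(c+d)‖ :=
            (norm_mul _ _).symm
        _ = ‖-(lam₁:ℂ)‖ := by rw [this]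
        _ = lam₁ := by rw [norm_neg, Complex.norm_real, Real.norm_eq_abs, abs_of_pos hlam₁]
    have hsum : ‖d‖ ≤ ‖c + d‖ :=
      absAddGe c d hswq.1 hswq.2 hszq.1 hszq.2
    have hcd : ‖c - d‖ ≤ lam₁ / ‖d‖ := by
      rw [le_div_iff₀ habs_sz_pos]
      calc ‖c - d‖ * ‖d‖
          ≤ ‖c - d‖ * ‖c + d‖ :=
            mul_le_mul_of_nonneg_left hsum (norm_nonneg _)
        _ = lam₁ := hdiff
    calc 1/2 * (‖c - d‖ / (‖c‖ * ‖d‖))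
        ≤ 1/2 * ((lam₁ / ‖d‖) / (‖c‖ * ‖d‖)) := by
          apply mul_le_mul_of_nonneg_left _ (by norm_num)
          exact div_le_div_of_nonneg_right hcd (by positivity)
      _ = lam₁ / (2 * ‖z‖ * ‖c‖) := by
          rw [← hszsq]; field_simp
  have hg1bound : ∀ t : ℝ, 0 < t →
      ‖(Complex.exp (2*I*c*(t:ℂ)) - 1)/(2*I*c) * (q t : ℂ)
        * (Complex.exp (-I*c*(t:ℂ)) * f w t - 1)‖
      ≤ (‖c‖)⁻¹ * (2*Q/‖c‖) * |q t| := by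
    intro t ht
    have ht0 : (0:ℝ) ≤ t := le_of_lt ht
    rw [norm_mul, norm_mul,
      Complex.norm_real, Real.norm_eq_abs]
    calc ‖(Complex.exp (2*I*c*(t:ℂ)) - 1)/(2*I*c)‖ * |q t|
          * ‖Complex.exp (-I*c*(t:ℂ)) * f w t - 1‖
        ≤ (‖c‖)⁻¹ * |q t| * (2*Q/‖c‖) := by
          apply mul_le_mul _ (hmb t ht0) (norm_nonneg _) (by positivity)
          exact mul_le_mul_of_nonneg_right (hkerabs t ht0) (abs_nonneg _)
      _ = (‖c‖)⁻¹ * (2*Q/‖c‖) * |q t| := by ring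
  have hA : ‖A‖ ≤ 2*Q := by
    rw [hA_def]
    calc ‖∫ t in Set.Ioi (0:ℝ), (Complex.exp (2*I*c*(t:ℂ)) - 1) * (q t:ℂ)‖
        ≤ ∫ t in Set.Ioi (0:ℝ), ‖(Complex.exp (2*I*c*(t:ℂ)) - 1) * (q t:ℂ)‖ :=
          norm_integral_le_integral_norm _
      _ ≤ ∫ t in Set.Ioi (0:ℝ), 2 * |q t| := by
          apply integral_mono_of_nonneg (ae_of_all _ fun t => norm_nonneg _) (hqI.const_mul 2)
          refine (ae_restrict_iff' measurableSet_Ioi).2 (ae_of_all _ fun t ht => ?_)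
          show ‖(Complex.exp (2*I*c*(t:ℂ)) - 1) * (q t:ℂ)‖ ≤ 2 * |q t|
          rw [norm_mul, Complex.norm_real, Real.norm_eq_abs]
          exact mul_le_mul_of_nonneg_right (kernelAbsLe' c hswim t (le_of_lt ht)) (abs_nonneg _)
      _ = 2*Q := by rw [integral_const_mul]
  have hT1 : ‖∫ t in Set.Ioi (0:ℝ),
      (Complex.exp (2*I*c*(t:ℂ)) - 1)/(2*I*c) * (q t:ℂ)
        * (Complex.exp (-I*c*(t:ℂ)) * f w t - 1)‖
      ≤ 2*Q^2 / ‖w‖ := by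
    calc ‖∫ t in Set.Ioi (0:ℝ),
          (Complex.exp (2*I*c*(t:ℂ)) - 1)/(2*I*c) * (q t:ℂ)
            * (Complex.exp (-I*c*(t:ℂ)) * f w t - 1)‖
        ≤ ∫ t in Set.Ioi (0:ℝ),
          ‖(Complex.exp (2*I*c*(t:ℂ)) - 1)/(2*I*c) * (q t:ℂ)
            * (Complex.exp (-I*c*(t:ℂ)) * f w t - 1)‖ :=
          norm_integral_le_integral_norm _
      _ ≤ ∫ t in Set.Ioi (0:ℝ), (‖c‖)⁻¹ * (2*Q/‖c‖) * |q t| := by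
          apply integral_mono_of_nonneg (ae_of_all _ fun t => norm_nonneg _)
            (hqI.const_mul _)
          refine (ae_restrict_iff' measurableSet_Ioi).2 (ae_of_all _ fun t ht => ?_)
          exact hg1bound t ht
      _ = (‖c‖)⁻¹ * (2*Q/‖c‖) * Q := by rw [integral_const_mul]
      _ = 2*Q^2/‖w‖ := by rw [← hswsq]; field_simp
  have hrepr : f w 0 - 1 + I/(2*d) * A
      = (∫ t in Set.Ioi (0:ℝ), (Complex.exp (2*I*c*(t:ℂ)) - 1)/(2*I*c) * (q t:ℂ)
          * (Complex.exp (-I*c*(t:ℂ)) * f w t - 1)) + ((2*I*c)⁻¹ + I/(2*d)) * A := by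
    rw [hstepa, hsplit]; ring
  have hb1 : ‖∫ t in Set.Ioi (0:ℝ),
      (Complex.exp (2*I*c*(t:ℂ)) - 1)/(2*I*c) * (q t:ℂ)
        * (Complex.exp (-I*c*(t:ℂ)) * f w t - 1)‖ ≤ 2*Q^2/‖w‖ := by
    exact hT1
  have hb2 : ‖((2*I*c)⁻¹ + I/(2*d)) * A‖ ≤ lam₁/(2*‖z‖*‖c‖) * (2*Q) := by
    rw [norm_mul]
    exact mul_le_mul hscalar hA (norm_nonneg _) (by positivity)
  rw [hrepr, Real.norm_eq_abs, _root_.abs_of_nonneg (inv_nonneg.2 hz_pos.le)]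
  have k1 : 2*Q^2/‖w‖ ≤ 4*Q^2 * (‖z‖)⁻¹ := by
    have e : 4*Q^2*(‖z‖)⁻¹ = 2*Q^2/(‖z‖/2) := by
      field_simp; ring
    rw [e, div_le_div_iff₀ hw_pos (by positivity)]
    nlinarith [sq_nonneg Q]
  have k2 : lam₁/(2*‖z‖*‖c‖)*(2*Q) ≤ Q*lam₁*(‖z‖)⁻¹ := by
    rw [div_mul_eq_mul_div, div_le_iff₀ (by positivity)]
    have e : Q*lam₁*(‖z‖)⁻¹ * (2*‖z‖*‖c‖)
        = 2*Q*lam₁*‖c‖ := by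
      field_simp
    rw [e]
    nlinarith [hsw_one, mul_nonneg hQ0 hlam₁.le]
  calc ‖(∫ t in Set.Ioi (0:ℝ),
        (Complex.exp (2*I*c*(t:ℂ)) - 1)/(2*I*c) * (q t:ℂ)
          * (Complex.exp (-I*c*(t:ℂ)) * f w t - 1)) + ((2*I*c)⁻¹ + I/(2*d)) * A‖
      ≤ ‖∫ t in Set.Ioi (0:ℝ),
        (Complex.exp (2*I*c*(t:ℂ)) - 1)/(2*I*c) * (q t:ℂ)
          * (Complex.exp (-I*c*(t:ℂ)) * f w t - 1)‖ + ‖((2*I*c)⁻¹ + I/(2*d)) * A‖ :=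
        norm_add_le _ _
    _ ≤ 2*Q^2/‖w‖ + lam₁/(2*‖z‖*‖c‖) * (2*Q) :=
        add_le_add hb1 hb2
    _ ≤ (4*Q^2 + Q*lam₁) * (‖z‖)⁻¹ := by
        have : (4*Q^2 + Q*lam₁) * (‖z‖)⁻¹
            = 4*Q^2*(‖z‖)⁻¹ + Q*lam₁*(‖z‖)⁻¹ := by ring
        rw [this]
        exact add_le_add k1 k2
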